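/- Let the squared H₂ norm be ‖G‖₂² = Trace(BᵀPB) with B = [0; M⁻¹W^{1/2}], W = diag(wᵢ), wᵢ ≥ 0, and P the solution of the constrained Lyapunov equation above. Then ‖G‖₂² = Σᵢ wᵢ (X₂)ᵢᵢ / mᵢ², and it satisfies the two-sided bound (min wᵢ)/(2 max dᵢ) · (Trace(NL†) + Σᵢ sᵢ/mᵢ) ≤ ‖G‖₂² ≤ (max wᵢ)/(2 min dᵢ) · (Trace(NL†) + Σᵢ sᵢ/mᵢ). -/

import Mathlib

open Matrix

open Complex Filter

set_option maxHeartbeats 1600000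



lemma aux_re (r : ℝ) (z w : ℂ) :
    ((r : ℂ) * ((starRingEnd ℂ) z * w)).re = r * (z.re * w.re + z.im * w.im) := by
  simp only [Complex.mul_re, Complex.mul_im, Complex.ofReal_re, Complex.ofReal_im,
    Complex.conj_re, Complex.conj_im]; ring

lemma aux_im (r : ℝ) (z w : ℂ) :
    ((r : ℂ) * ((starRingEnd ℂ) z * w)).im = r * (z.re * w.im - z.im * w.re) := by
  simp only [Complex.mul_re, Complex.mul_im, Complex.ofReal_re, Complex.ofReal_im,
    Complex.conj_re, Complex.conj_im]; ring

lemma pencil_lemma {n : ℕ} (m d : Fin n → ℝ) (hm : ∀ i, 0 < m i) (hd : ∀ i, 0 < d i)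
    (L : Matrix (Fin n) (Fin n) ℝ) (hLsym : L.IsSymm) (hLpsd : L.PosSemidef)
    (lam : ℂ) (x : Fin n → ℂ) (hx : x ≠ 0)
    (heq : ∀ i, (∑ j, (L i j : ℂ) * x j) + (d i : ℂ) * lam * x i
      + (m i : ℂ) * lam ^ 2 * x i = 0) :
    lam = 0 ∨ lam.re < 0 := by
  classical
  set a : ℂ := ∑ i, (starRingEnd ℂ) (x i) * ∑ j, (L i j : ℂ) * x j with ha
  set b : ℝ := ∑ i, d i * Complex.normSq (x i) with hbdef
  set c : ℝ := ∑ i, m i * Complex.normSq (x i) with hcdef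
  have hadouble : a = ∑ i, ∑ j, (L i j : ℂ) * ((starRingEnd ℂ) (x i) * x j) := by
    rw [ha]; apply Finset.sum_congr rfl; intro i _
    rw [Finset.mul_sum]; apply Finset.sum_congr rfl; intro j _; ring
  have hare : a.re = (∑ i, ∑ j, L i j * ((x i).re * (x j).re))
      + ∑ i, ∑ j, L i j * ((x i).im * (x j).im) := by
    rw [hadouble, Complex.re_sum, ← Finset.sum_add_distrib]
    apply Finset.sum_congr rfl; intro i _
    rw [Complex.re_sum, ← Finset.sum_add_distrib]
    apply Finset.sum_congr rfl; intro j _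
    rw [aux_re]; ring
  have haim : a.im = 0 := by
    have h1 : a.im = ∑ i, ∑ j, L i j * ((x i).re * (x j).im - (x i).im * (x j).re) := by
      rw [hadouble, Complex.im_sum]
      apply Finset.sum_congr rfl; intro i _
      rw [Complex.im_sum]
      apply Finset.sum_congr rfl; intro j _
      rw [aux_im]
    have h2 : a.im = -a.im := by
      nth_rewrite 1 [h1]
      rw [Finset.sum_comm, h1, ← Finset.sum_neg_distrib]
      apply Finset.sum_congr rfl; intro i _
      rw [← Finset.sum_neg_distrib]
      apply Finset.sum_congr rfl; intro j _
      have hsymm : L j i = L i j := by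
        have h := hLsym
        rw [Matrix.IsSymm] at h
        have h2 := congrFun (congrFun h i) j
        simpa [Matrix.transpose_apply] using h2
      rw [hsymm]; ring
    linarith
  have hq : ∀ y : Fin n → ℝ, 0 ≤ ∑ i, ∑ j, L i j * (y i * y j) := by
    intro y
    have h := hLpsd.dotProduct_mulVec_nonneg y
    have heqq : star y ⬝ᵥ L *ᵥ y = ∑ i, ∑ j, L i j * (y i * y j) := by
      simp only [dotProduct, Matrix.mulVec, Pi.star_apply, star_trivial]
      apply Finset.sum_congr rfl; intro i _
      simp only [dotProduct, Finset.mul_sum]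
      apply Finset.sum_congr rfl; intro j _; ring
    rw [heqq] at h; exact h
  have hare' : 0 ≤ a.re := by rw [hare]; exact add_nonneg (hq _) (hq _)
  have hb : (b : ℂ) * lam = ∑ i, (starRingEnd ℂ) (x i) * ((d i : ℂ) * lam * x i) := by
    rw [hbdef]; push_cast; rw [Finset.sum_mul]
    apply Finset.sum_congr rfl; intro i _
    rw [← Complex.mul_conj]; ring
  have hc : (c : ℂ) * lam ^ 2 = ∑ i, (starRingEnd ℂ) (x i) * ((m i : ℂ) * lam ^ 2 * x i) := by
    rw [hcdef]; push_cast; rw [Finset.sum_mul]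
    apply Finset.sum_congr rfl; intro i _
    rw [← Complex.mul_conj]; ring
  have key : a + (b : ℂ) * lam + (c : ℂ) * lam ^ 2 = 0 := by
    rw [ha, hb, hc, ← Finset.sum_add_distrib, ← Finset.sum_add_distrib]
    rw [Finset.sum_eq_zero]
    intro i _
    rw [← mul_add, ← mul_add, heq i, mul_zero]
  have hre : a.re + b * lam.re + c * (lam.re ^ 2 - lam.im ^ 2) = 0 := by
    have h := congrArg Complex.re key
    have hsq : lam ^ 2 = lam * lam := sq lam
    simp only [hsq, Complex.add_re, Complex.mul_re, Complex.mul_im, Complex.ofReal_re,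
      Complex.ofReal_im, Complex.zero_re, zero_mul, mul_zero, sub_zero, zero_sub] at h
    nlinarith [h]
  have him : lam.im * (b + 2 * c * lam.re) = 0 := by
    have h := congrArg Complex.im key
    have hsq : lam ^ 2 = lam * lam := sq lam
    simp only [hsq, Complex.add_im, Complex.mul_re, Complex.mul_im, Complex.ofReal_re,
      Complex.ofReal_im, Complex.zero_im, zero_mul, mul_zero, add_zero, zero_add,
      haim] at h
    nlinarith [h]
  obtain ⟨i₀, hi₀⟩ : ∃ i, x i ≠ 0 := by
    by_contra h; push_neg at h; exact hx (funext h)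
  have hb0 : 0 < b := by
    apply Finset.sum_pos' (fun i _ => mul_nonneg (hd i).le (Complex.normSq_nonneg _))
    exact ⟨i₀, Finset.mem_univ _, mul_pos (hd i₀) (Complex.normSq_pos.mpr hi₀)⟩
  have hc0 : 0 < c := by
    apply Finset.sum_pos' (fun i _ => mul_nonneg (hm i).le (Complex.normSq_nonneg _))
    exact ⟨i₀, Finset.mem_univ _, mul_pos (hm i₀) (Complex.normSq_pos.mpr hi₀)⟩
  by_contra hcon
  push_neg at hcon
  obtain ⟨hlam0, hlre⟩ := hcon
  have hpos : 0 < b + 2 * c * lam.re := by nlinarith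
  have him0 : lam.im = 0 := by
    rcases mul_eq_zero.mp him with h | h
    · exact h
    · linarith
  have hre0 : lam.re ≠ 0 := by
    intro h; exact hlam0 (Complex.ext h him0)
  have hpos2 : 0 < lam.re := lt_of_le_of_ne hlre (Ne.symm hre0)
  rw [him0] at hre
  nlinarith [hre, hare', mul_pos hb0 hpos2, mul_pos (mul_pos hc0 hpos2) hpos2]

lemma kernel_lemma {n : ℕ} (L Ldag : Matrix (Fin n) (Fin n) ℝ)
    (hLdag₂ : Ldag * L = 1 - (n : ℝ)⁻¹ • Matrix.of (fun _ _ => (1 : ℝ)))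
    (x : Fin n → ℂ) (hker : ∀ i, (∑ j, (L i j : ℂ) * x j) = 0) :
    ∀ i, x i = (n : ℂ)⁻¹ * ∑ j, x j := by
  classical
  intro i
  have h2 : (0 : ℂ) = ∑ j, ((Ldag * L) i j : ℂ) * x j := by
    have h0 : (0 : ℂ) = ∑ k, (Ldag i k : ℂ) * ∑ j, (L k j : ℂ) * x j := by
      simp [hker]
    rw [h0]
    simp_rw [Finset.mul_sum, Matrix.mul_apply]
    rw [Finset.sum_comm]
    apply Finset.sum_congr rfl; intro j _
    push_cast
    rw [Finset.sum_mul]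
    apply Finset.sum_congr rfl; intro k _; ring
  have h3 : ∀ j, ((Ldag * L) i j : ℂ) = (if i = j then (1 : ℂ) else 0) - (n : ℂ)⁻¹ := by
    intro j; rw [hLdag₂]
    simp only [Matrix.sub_apply, Matrix.smul_apply, Matrix.of_apply, Matrix.one_apply,
      smul_eq_mul, mul_one]
    split_ifs <;> push_cast <;> ring
  rw [Finset.sum_congr rfl (fun j _ => by rw [h3 j])] at h2
  simp only [sub_mul, Finset.sum_sub_distrib, ite_mul, one_mul, zero_mul] at h2
  rw [Finset.sum_ite_eq (Finset.univ : Finset (Fin n)) i (fun j => x j)] at h2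
  simp only [Finset.mem_univ, if_true] at h2
  rw [← Finset.mul_sum] at h2
  exact sub_eq_zero.mp h2.symm


attribute [local instance] Matrix.linftyOpNormedRing Matrix.linftyOpNormedAlgebra
  Matrix.linftyOpNormedSpace

lemma vecMulVec_mul' {ι : Type*} [Fintype ι] (a b : ι → ℝ) (C : Matrix ι ι ℝ) :
    vecMulVec a b * C = vecMulVec a (b ᵥ* C) := by
  ext i j
  simp only [Matrix.mul_apply, vecMulVec_apply, Matrix.vecMul, dotProduct,
    Finset.mul_sum]
  exact Finset.sum_congr rfl fun k _ => by ring

lemma mul_vecMulVec' {ι : Type*} [Fintype ι] (a b : ι → ℝ) (C : Matrix ι ι ℝ) :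
    C * vecMulVec a b = vecMulVec (C *ᵥ a) b := by
  ext i j
  simp only [Matrix.mul_apply, vecMulVec_apply, Matrix.mulVec, dotProduct,
    Finset.sum_mul]
  exact Finset.sum_congr rfl fun k _ => by ring

lemma vecMul_vecMulVec' {ι : Type*} [Fintype ι] (a b u : ι → ℝ) :
    u ᵥ* vecMulVec a b = (u ⬝ᵥ a) • b := by
  ext j
  simp only [Matrix.vecMul, dotProduct, vecMulVec_apply, Pi.smul_apply, smul_eq_mul,
    Finset.sum_mul]
  exact Finset.sum_congr rfl fun k _ => by ring

lemma dot_sum_split {n : ℕ} (f g : Fin n ⊕ Fin n → ℝ) :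
    f ⬝ᵥ g = (f ∘ Sum.inl) ⬝ᵥ (g ∘ Sum.inl) + (f ∘ Sum.inr) ⬝ᵥ (g ∘ Sum.inr) := by
  simp [dotProduct, Fintype.sum_sum_type, Function.comp]

lemma vecMulVec_smul_right {ι : Type*} [Fintype ι] (a b : ι → ℝ) (c : ℝ) :
    vecMulVec a (c • b) = c • vecMulVec a b := by
  ext i j; simp only [vecMulVec_apply, Matrix.smul_apply, Pi.smul_apply, smul_eq_mul]; ring

lemma vecMul_smul' {ι : Type*} [Fintype ι] (u : ι → ℝ) (c : ℝ) (B : Matrix ι ι ℝ) :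
    u ᵥ* (c • B) = c • (u ᵥ* B) := by
  ext j
  simp only [Matrix.vecMul, dotProduct, Matrix.smul_apply, Pi.smul_apply, smul_eq_mul,
    Finset.mul_sum]
  exact Finset.sum_congr rfl fun k _ => by ring

lemma quad_conj {ι : Type*} [Fintype ι] (C W : Matrix ι ι ℝ) (z : ι → ℝ) :
    z ⬝ᵥ (Cᵀ * W * C) *ᵥ z = (C *ᵥ z) ⬝ᵥ W *ᵥ (C *ᵥ z) := by
  rw [Matrix.mul_assoc, ← Matrix.mulVec_mulVec, ← Matrix.mulVec_mulVec,
    Matrix.dotProduct_mulVec, Matrix.vecMul_transpose]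

set_option maxHeartbeats 1600000 in
theorem P_quadform_nonneg
    (n : ℕ) (hn : 0 < n) (m d : Fin n → ℝ)
    (hm : ∀ i, 0 < m i) (hd : ∀ i, 0 < d i)
    (M D : Matrix (Fin n) (Fin n) ℝ)
    (hM : M = diagonal m) (hD : D = diagonal d)
    (L Ldag N S : Matrix (Fin n) (Fin n) ℝ)
    (hLsym : L.IsSymm) (hLpsd : L.PosSemidef) (hL1 : L.mulVec (fun _ => 1) = 0)
    (hLdag₂ : Ldag * L = 1 - (n : ℝ)⁻¹ • Matrix.of (fun _ _ => (1 : ℝ)))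
    (hNpsd : N.PosSemidef) (hSpsd : S.PosSemidef)
    (A : Matrix (Fin n ⊕ Fin n) (Fin n ⊕ Fin n) ℝ)
    (hA : A = fromBlocks 0 1 (-(M⁻¹ * L)) (-(M⁻¹ * D)))
    (P : Matrix (Fin n ⊕ Fin n) (Fin n ⊕ Fin n) ℝ)
    (hLyap : P * A + Aᵀ * P + fromBlocks N 0 0 S = 0)
    (hPv₀ : P.mulVec (Sum.elim (fun _ => 1) 0) = 0) :
    ∀ v : Fin n ⊕ Fin n → ℝ, 0 ≤ v ⬝ᵥ P.mulVec v := by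
  classical
  have hmne : ∀ i, m i ≠ 0 := fun i => (hm i).ne'
  have hMinv : M⁻¹ = diagonal (fun i => (m i)⁻¹) := by
    apply Matrix.inv_eq_right_inv
    rw [hM, diagonal_mul_diagonal]
    convert Matrix.diagonal_one using 2
    exact funext fun i => mul_inv_cancel₀ (hmne i)
  have hrows : ∀ (lam : ℂ) (z : Fin n ⊕ Fin n → ℂ),
      ((A.map (Complex.ofRealHom)) *ᵥ z = lam • z) →
      (∀ i, z (Sum.inr i) = lam * z (Sum.inl i)) ∧
      (∀ i, (∑ j, (L i j : ℂ) * z (Sum.inl j)) + (d i : ℂ) * lam * z (Sum.inl i)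
        + (m i : ℂ) * lam ^ 2 * z (Sum.inl i) = 0) := by
    intro lam z hAz
    set x : Fin n → ℂ := z ∘ Sum.inl with hxdef
    set y : Fin n → ℂ := z ∘ Sum.inr with hydef
    have hblocks : A.map (Complex.ofRealHom) = fromBlocks 0 1
        ((-(M⁻¹ * L)).map Complex.ofRealHom) ((-(M⁻¹ * D)).map Complex.ofRealHom) := by
      rw [hA, Matrix.fromBlocks_map]
      congr 1 <;> simp [Matrix.map_zero, Matrix.map_one]
    have hmv := hAz
    rw [hblocks, Matrix.fromBlocks_mulVec] at hmv
    have hy : ∀ i, y i = lam * x i := by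
      intro i
      have h := congrFun hmv (Sum.inl i)
      show z (Sum.inr i) = lam * z (Sum.inl i)
      simpa [Matrix.zero_mulVec, Matrix.one_mulVec, Pi.smul_apply, smul_eq_mul] using h
    have hrow : ∀ i, (∑ j, (L i j : ℂ) * x j) + (d i : ℂ) * lam * x i
        + (m i : ℂ) * lam ^ 2 * x i = 0 := by
      intro i
      have h := congrFun hmv (Sum.inr i)
      simp only [Sum.elim_inr, Pi.add_apply, Pi.smul_apply, smul_eq_mul] at h
      have hC : ∀ j, ((-(M⁻¹ * L)).map Complex.ofRealHom) i j
          = -((((m i)⁻¹ : ℝ) : ℂ) * (L i j : ℂ)) := by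
        intro j
        simp [Matrix.map_apply, hMinv, Matrix.diagonal_mul, Matrix.neg_apply]
      have hDD : (M⁻¹ * D) = diagonal (fun i => (m i)⁻¹ * d i) := by
        rw [hMinv, hD, diagonal_mul_diagonal]
      have hD' : ∀ j, ((-(M⁻¹ * D)).map Complex.ofRealHom) i j
          = -(if i = j then (((m i)⁻¹ * d i : ℝ) : ℂ) else 0) := by
        intro j
        simp only [Matrix.map_apply, Matrix.neg_apply, hDD, Matrix.diagonal_apply]
        split_ifs <;> simp
      have h1 : (((-(M⁻¹ * L)).map Complex.ofRealHom) *ᵥ x) i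
          = -((((m i)⁻¹ : ℝ) : ℂ)) * ∑ j, (L i j : ℂ) * x j := by
        simp only [Matrix.mulVec, dotProduct, neg_mul, Finset.mul_sum,
          ← Finset.sum_neg_distrib]
        exact Finset.sum_congr rfl fun j _ => by rw [hC j]; ring
      have h2 : (((-(M⁻¹ * D)).map Complex.ofRealHom) *ᵥ y) i
          = -((((m i)⁻¹ * d i : ℝ) : ℂ)) * y i := by
        simp only [Matrix.mulVec, dotProduct]
        rw [Finset.sum_congr rfl (fun j _ => by rw [hD' j])]
        simp only [neg_mul, ite_mul, zero_mul]
        rw [Finset.sum_neg_distrib, Finset.sum_ite_eq, if_pos (Finset.mem_univ i)]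
      have hy' : z (Sum.inr i) = lam * x i := hy i
      rw [h1, h2] at h
      rw [hy'] at h
      have hmC : ((m i : ℝ) : ℂ) ≠ 0 := by exact_mod_cast hmne i
      have hmm : ((m i : ℝ) : ℂ) * (((m i : ℝ) : ℂ))⁻¹ = 1 := mul_inv_cancel₀ hmC
      have hyy : y i = lam * x i := hy i
      rw [hyy] at h
      push_cast at h
      linear_combination (-((m i : ℝ) : ℂ)) * h
        - ((∑ j, (L i j : ℂ) * x j) + (d i : ℂ) * lam * x i) * hmm
    exact ⟨hy, hrow⟩
  have heigA : ∀ (lam : ℂ) (z : Fin n ⊕ Fin n → ℂ), z ≠ 0 →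
      ((A.map (Complex.ofRealHom)) *ᵥ z = lam • z) → lam = 0 ∨ lam.re < 0 := by
    intro lam z hz hAz
    obtain ⟨hy, hrow⟩ := hrows lam z hAz
    have hxne : (z ∘ Sum.inl) ≠ 0 := by
      intro h0
      apply hz
      funext k
      cases k with
      | inl i => simpa using congrFun h0 i
      | inr i =>
        have hyi := hy i
        rw [show z (Sum.inl i) = 0 from by simpa using congrFun h0 i, mul_zero] at hyi
        exact hyi
    exact pencil_lemma m d hm hd L hLsym hLpsd lam (z ∘ Sum.inl) hxne hrow
  -- 1 - A is invertible
  have hIA : IsUnit (1 - A).det := by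
    rw [isUnit_iff_ne_zero]
    intro hdet
    obtain ⟨v, hvne, hv0⟩ := (Matrix.exists_mulVec_eq_zero_iff).mpr hdet
    have hAv : A *ᵥ v = v := by
      have h := hv0
      rw [Matrix.sub_mulVec, Matrix.one_mulVec, sub_eq_zero] at h
      exact h.symm
    have hAv' : (A.map Complex.ofRealHom) *ᵥ (fun k => ((v k : ℝ) : ℂ))
        = (1 : ℂ) • (fun k => ((v k : ℝ) : ℂ)) := by
      funext k
      have h := congrFun hAv k
      simp only [Matrix.mulVec, dotProduct] at h ⊢
      simp only [Matrix.map_apply, Complex.ofRealHom_eq_coe, Pi.smul_apply, smul_eq_mul, one_mul]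
      exact_mod_cast h
    have hzne : (fun k => ((v k : ℝ) : ℂ)) ≠ 0 := by
      intro h0; apply hvne; funext k
      have h := congrFun h0 k
      simp only [Pi.zero_apply] at h ⊢
      exact_mod_cast h
    rcases heigA 1 _ hzne hAv' with h | h
    · exact one_ne_zero h
    · rw [Complex.one_re] at h; linarith
  set Q : Matrix (Fin n ⊕ Fin n) (Fin n ⊕ Fin n) ℝ := fromBlocks N 0 0 S with hQdef
  set R : Matrix (Fin n ⊕ Fin n) (Fin n ⊕ Fin n) ℝ := (1 - A)⁻¹ with hRdef
  have hR1 : (1 - A) * R = 1 := Matrix.mul_nonsing_inv _ hIA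
  have hR2 : R * (1 - A) = 1 := Matrix.nonsing_inv_mul _ hIA
  set F : Matrix (Fin n ⊕ Fin n) (Fin n ⊕ Fin n) ℝ := (1 + A) * R with hFdef
  have hQe : P * A + Aᵀ * P = -Q := eq_neg_of_add_eq_zero_left hLyap
  have hE : (1 - Aᵀ) * P * (1 - A) - (1 + Aᵀ) * P * (1 + A) = Q + Q := by
    have expand : (1 - Aᵀ) * P * (1 - A) - (1 + Aᵀ) * P * (1 + A)
        = -(P * A + Aᵀ * P) - (P * A + Aᵀ * P) := by noncomm_ring
    rw [expand, hQe, neg_neg, sub_neg_eq_add]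
  have hRT : Rᵀ * (1 - Aᵀ) = 1 := by
    have h := congrArg Matrix.transpose hR1
    rwa [Matrix.transpose_mul, Matrix.transpose_sub, Matrix.transpose_one] at h
  have hFT : Fᵀ = Rᵀ * (1 + Aᵀ) := by
    rw [hFdef, Matrix.transpose_mul, Matrix.transpose_add, Matrix.transpose_one]
  have hstein : P = Fᵀ * P * F + (Rᵀ * Q * R + Rᵀ * Q * R) := by
    have hP1 : P = Rᵀ * ((1 - Aᵀ) * P * (1 - A)) * R := by
      calc P = 1 * P * 1 := by rw [Matrix.one_mul, Matrix.mul_one]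
      _ = (Rᵀ * (1 - Aᵀ)) * P * ((1 - A) * R) := by rw [hRT, hR1]
      _ = Rᵀ * ((1 - Aᵀ) * P * (1 - A)) * R := by simp only [Matrix.mul_assoc]
    have hE' : (1 - Aᵀ) * P * (1 - A) = (1 + Aᵀ) * P * (1 + A) + (Q + Q) := by
      rw [← hE]; noncomm_ring
    calc P = Rᵀ * ((1 - Aᵀ) * P * (1 - A)) * R := hP1
    _ = Rᵀ * ((1 + Aᵀ) * P * (1 + A) + (Q + Q)) * R := by rw [hE']
    _ = Rᵀ * ((1 + Aᵀ) * P * (1 + A)) * R + Rᵀ * (Q + Q) * R := by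
        rw [Matrix.mul_add, Matrix.add_mul]
    _ = Fᵀ * P * F + (Rᵀ * Q * R + Rᵀ * Q * R) := by
        rw [hFT, hFdef]; noncomm_ring
  have hQpsd : ∀ z : Fin n ⊕ Fin n → ℝ, 0 ≤ z ⬝ᵥ Q *ᵥ z := by
    intro z
    have h1 : Q *ᵥ z = Sum.elim (N *ᵥ (z ∘ Sum.inl)) (S *ᵥ (z ∘ Sum.inr)) := by
      rw [hQdef, Matrix.fromBlocks_mulVec]
      simp [Matrix.zero_mulVec]
    rw [h1, dot_sum_split]
    have hN := hNpsd.dotProduct_mulVec_nonneg (z ∘ Sum.inl)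
    have hS := hSpsd.dotProduct_mulVec_nonneg (z ∘ Sum.inr)
    simp only [star_trivial] at hN hS
    have e1 : (Sum.elim (N *ᵥ (z ∘ Sum.inl)) (S *ᵥ (z ∘ Sum.inr))) ∘ Sum.inl
        = N *ᵥ (z ∘ Sum.inl) := rfl
    have e2 : (Sum.elim (N *ᵥ (z ∘ Sum.inl)) (S *ᵥ (z ∘ Sum.inr))) ∘ Sum.inr
        = S *ᵥ (z ∘ Sum.inr) := rfl
    rw [e1, e2]
    exact add_nonneg hN hS
  have hstep : ∀ z : Fin n ⊕ Fin n → ℝ, (F *ᵥ z) ⬝ᵥ P *ᵥ (F *ᵥ z) ≤ z ⬝ᵥ P *ᵥ z := by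
    intro z
    have heqq : z ⬝ᵥ P *ᵥ z = (F *ᵥ z) ⬝ᵥ P *ᵥ (F *ᵥ z)
        + ((R *ᵥ z) ⬝ᵥ Q *ᵥ (R *ᵥ z) + (R *ᵥ z) ⬝ᵥ Q *ᵥ (R *ᵥ z)) := by
      conv_lhs => rw [hstein]
      rw [← quad_conj F P z, ← quad_conj R Q z]
      simp only [Matrix.add_mulVec, dotProduct_add]
    rw [heqq]
    exact le_add_of_nonneg_right (add_nonneg (hQpsd _) (hQpsd _))
  have hFpow : ∀ (k : ℕ) (z : Fin n ⊕ Fin n → ℝ),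
      ((F ^ k) *ᵥ z) ⬝ᵥ P *ᵥ ((F ^ k) *ᵥ z) ≤ z ⬝ᵥ P *ᵥ z := by
    intro k
    induction k with
    | zero => intro z; simp [Matrix.one_mulVec]
    | succ k ih =>
      intro z
      have hsp : (F ^ (k + 1)) *ᵥ z = (F ^ k) *ᵥ (F *ᵥ z) := by
        rw [Matrix.mulVec_mulVec, ← pow_succ]
      rw [hsp]
      exact le_trans (ih (F *ᵥ z)) (hstep z)
  -- the projection onto the kernel direction
  have hnne : Nonempty (Fin n) := Fin.pos_iff_nonempty.mp hn
  set c₀ : ℝ := ∑ i, d i with hc₀def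
  have hc₀ : 0 < c₀ := Finset.sum_pos (fun i _ => hd i) Finset.univ_nonempty
  set u : Fin n ⊕ Fin n → ℝ := Sum.elim d m with hudef
  set v₀ : Fin n ⊕ Fin n → ℝ := Sum.elim (fun _ => 1) 0 with hv₀def
  have hAv₀ : A *ᵥ v₀ = 0 := by
    rw [hA, Matrix.fromBlocks_mulVec]
    have h1 : v₀ ∘ Sum.inl = fun _ => (1 : ℝ) := rfl
    have h2 : v₀ ∘ Sum.inr = 0 := rfl
    rw [h1, h2]
    funext k
    cases k with
    | inl i => simp
    | inr i =>
      simp only [Sum.elim_inr, Pi.add_apply, Matrix.mulVec_zero, Pi.zero_apply, add_zero]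
      rw [Matrix.neg_mulVec, ← Matrix.mulVec_mulVec, hL1]
      simp
  have huA : u ᵥ* A = 0 := by
    rw [hA, Matrix.vecMul_fromBlocks]
    have h1 : u ∘ Sum.inl = d := rfl
    have h2 : u ∘ Sum.inr = m := rfl
    rw [h1, h2]
    have hmM : m ᵥ* M⁻¹ = fun _ => (1 : ℝ) := by
      rw [hMinv]; funext j; rw [Matrix.vecMul_diagonal]; exact mul_inv_cancel₀ (hmne j)
    have h3 : m ᵥ* (-(M⁻¹ * L)) = 0 := by
      rw [Matrix.vecMul_neg, ← Matrix.vecMul_vecMul, hmM]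
      have h5 : (fun _ => (1 : ℝ)) ᵥ* L = 0 := by
        rw [← hLsym, Matrix.vecMul_transpose, hL1]
      rw [h5, neg_zero]
    have h4 : m ᵥ* (-(M⁻¹ * D)) = -d := by
      rw [Matrix.vecMul_neg, ← Matrix.vecMul_vecMul, hmM, hD]
      funext j; simp [Matrix.vecMul_diagonal]
    rw [h3, h4, Matrix.vecMul_zero, Matrix.vecMul_one]
    funext k
    cases k with
    | inl i => simp
    | inr i => simp
  have hRv₀ : R *ᵥ v₀ = v₀ := by
    have h : (1 - A) *ᵥ v₀ = v₀ := by rw [Matrix.sub_mulVec, Matrix.one_mulVec, hAv₀, sub_zero]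
    calc R *ᵥ v₀ = R *ᵥ ((1 - A) *ᵥ v₀) := by rw [h]
    _ = (R * (1 - A)) *ᵥ v₀ := by rw [Matrix.mulVec_mulVec]
    _ = v₀ := by rw [hR2, Matrix.one_mulVec]
  have hFv₀ : F *ᵥ v₀ = v₀ := by
    rw [hFdef, ← Matrix.mulVec_mulVec, hRv₀, Matrix.add_mulVec, Matrix.one_mulVec, hAv₀,
      add_zero]
  have huR : u ᵥ* R = u := by
    have h : u ᵥ* (1 - A) = u := by rw [Matrix.vecMul_sub, Matrix.vecMul_one, huA, sub_zero]
    calc u ᵥ* R = (u ᵥ* (1 - A)) ᵥ* R := by rw [h]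
    _ = u ᵥ* ((1 - A) * R) := by rw [Matrix.vecMul_vecMul]
    _ = u := by rw [hR1, Matrix.vecMul_one]
  have huF : u ᵥ* F = u := by
    rw [hFdef, ← Matrix.vecMul_vecMul]
    have h : u ᵥ* (1 + A) = u := by rw [Matrix.vecMul_add, Matrix.vecMul_one, huA, add_zero]
    rw [h, huR]
  have huv₀ : u ⬝ᵥ v₀ = c₀ := by
    rw [dot_sum_split]
    have h1 : u ∘ Sum.inl = d := rfl
    have h2 : u ∘ Sum.inr = m := rfl
    have h3 : v₀ ∘ Sum.inl = fun _ => (1 : ℝ) := rfl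
    have h4 : v₀ ∘ Sum.inr = 0 := rfl
    rw [h1, h2, h3, h4]
    simp [dotProduct, hc₀def]
  set Pi₀ : Matrix (Fin n ⊕ Fin n) (Fin n ⊕ Fin n) ℝ := c₀⁻¹ • vecMulVec v₀ u with hPidef
  have hPiv : ∀ z : Fin n ⊕ Fin n → ℝ, Pi₀ *ᵥ z = (c₀⁻¹ * (u ⬝ᵥ z)) • v₀ := by
    intro z
    rw [hPidef, Matrix.smul_mulVec]
    funext i
    simp only [Pi.smul_apply, smul_eq_mul]
    have h : (vecMulVec v₀ u *ᵥ z) i = v₀ i * (u ⬝ᵥ z) := by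
      simp only [Matrix.mulVec, vecMulVec_apply, dotProduct, Finset.mul_sum]
      exact Finset.sum_congr rfl fun k _ => by ring
    rw [h]; ring
  have hFPi : F * Pi₀ = Pi₀ := by
    rw [hPidef, Matrix.mul_smul, mul_vecMulVec', hFv₀]
  have hPiF : Pi₀ * F = Pi₀ := by
    rw [hPidef, Matrix.smul_mul, vecMulVec_mul', huF]
  have huPi : u ᵥ* Pi₀ = u := by
    rw [hPidef, vecMul_smul', vecMul_vecMulVec', huv₀, smul_smul,
      inv_mul_cancel₀ hc₀.ne', one_smul]
  have hPiPi : Pi₀ * Pi₀ = Pi₀ := by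
    rw [hPidef, Matrix.smul_mul, Matrix.mul_smul, vecMulVec_mul', vecMul_vecMulVec', huv₀,
      vecMulVec_smul_right, smul_smul, smul_smul]
    rw [show c₀⁻¹ * c₀⁻¹ * c₀ = c₀⁻¹ by field_simp]
  set G : Matrix (Fin n ⊕ Fin n) (Fin n ⊕ Fin n) ℝ := F - Pi₀ with hGdef
  have hGPi : G * Pi₀ = 0 := by rw [hGdef, Matrix.sub_mul, hFPi, hPiPi, sub_self]
  have hFdecomp : F = Pi₀ + G := by rw [hGdef, add_sub_cancel]
  have hGpow : ∀ k : ℕ, F ^ (k + 1) = Pi₀ + G ^ (k + 1) := by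
    intro k
    induction k with
    | zero => rw [pow_one, pow_one]; exact hFdecomp
    | succ k ih =>
      have hGkPi : G ^ (k + 1) * Pi₀ = 0 := by
        rw [pow_succ, Matrix.mul_assoc, hGPi, Matrix.mul_zero]
      calc F ^ (k + 2) = F ^ (k + 1) * F := by rw [pow_succ]
      _ = (Pi₀ + G ^ (k + 1)) * F := by rw [ih]
      _ = Pi₀ * F + G ^ (k + 1) * F := by rw [Matrix.add_mul]
      _ = Pi₀ + (G ^ (k + 1) * Pi₀ + G ^ (k + 1) * G) := by
          rw [hPiF]; nth_rewrite 1 [hFdecomp]; rw [Matrix.mul_add]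
      _ = Pi₀ + G ^ (k + 2) := by rw [hGkPi, zero_add, ← pow_succ]
  have huG : u ᵥ* G = 0 := by
    rw [hGdef, Matrix.vecMul_sub, huF, huPi, sub_self]
  -- complexification
  have hφA : (Complex.ofRealHom.mapMatrix A : Matrix (Fin n ⊕ Fin n) (Fin n ⊕ Fin n) ℂ)
      = A.map Complex.ofRealHom := rfl
  set φ := (Complex.ofRealHom.mapMatrix :
    Matrix (Fin n ⊕ Fin n) (Fin n ⊕ Fin n) ℝ →+* Matrix (Fin n ⊕ Fin n) (Fin n ⊕ Fin n) ℂ)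
    with hφdef
  set G' : Matrix (Fin n ⊕ Fin n) (Fin n ⊕ Fin n) ℂ := φ G with hG'def
  have hG'entry : ∀ (k : ℕ) (i j : Fin n ⊕ Fin n),
      (G' ^ k) i j = (((G ^ k) i j : ℝ) : ℂ) := by
    intro k i j
    rw [hG'def, ← map_pow]
    simp [hφdef, RingHom.mapMatrix_apply, Matrix.map_apply]
  have heigG : ∀ (μ : ℂ) (z : Fin n ⊕ Fin n → ℂ), z ≠ 0 → G' *ᵥ z = μ • z → ‖μ‖ < 1 := by
    intro μ z hz hGz
    by_cases hμ0 : μ = 0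
    · rw [hμ0]; norm_num
    have hu'G : (fun i => ((u i : ℝ) : ℂ)) ᵥ* G' = 0 := by
      funext j
      have h := congrFun huG j
      simp only [Matrix.vecMul, dotProduct, Pi.zero_apply] at h ⊢
      rw [hG'def]
      simp only [hφdef, RingHom.mapMatrix_apply, Matrix.map_apply, Complex.ofRealHom_eq_coe]
      exact_mod_cast h
    have hudot : (fun i => ((u i : ℝ) : ℂ)) ⬝ᵥ z = 0 := by
      have h1 : (fun i => ((u i : ℝ) : ℂ)) ⬝ᵥ (G' *ᵥ z) = 0 := by
        rw [Matrix.dotProduct_mulVec, hu'G, zero_dotProduct]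
      rw [hGz, dotProduct_smul, smul_eq_mul] at h1
      exact (mul_eq_zero.mp h1).resolve_left hμ0
    have hPi'z : (φ Pi₀) *ᵥ z = 0 := by
      funext i
      simp only [hφdef, RingHom.mapMatrix_apply, Matrix.map_apply, Matrix.mulVec,
        dotProduct, Pi.zero_apply, hPidef, Matrix.smul_apply, vecMulVec_apply,
        smul_eq_mul, Complex.ofRealHom_eq_coe]
      have h1 : ∀ j, ((c₀⁻¹ * (v₀ i * u j) : ℝ) : ℂ) * z j
          = ((c₀⁻¹ : ℝ) : ℂ) * ((v₀ i : ℝ) : ℂ) * (((u j : ℝ) : ℂ) * z j) := by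
        intro j; push_cast; ring
      rw [Finset.sum_congr rfl (fun j _ => h1 j), ← Finset.mul_sum]
      have h2 : ∑ j, ((u j : ℝ) : ℂ) * z j = 0 := hudot
      rw [h2, mul_zero]
    have hF'z : (φ F) *ᵥ z = μ • z := by
      have h : φ F = φ Pi₀ + G' := by rw [hG'def, ← map_add, ← hFdecomp]
      rw [h, Matrix.add_mulVec, hPi'z, zero_add, hGz]
    have hcayley : (1 - A) * F = 1 + A := by
      have hcomm : (1 - A) * (1 + A) = (1 + A) * (1 - A) := by noncomm_ring
      rw [hFdef, ← Matrix.mul_assoc, hcomm, Matrix.mul_assoc, hR1, Matrix.mul_one]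
    have hcayley' : (1 - φ A) * φ F = 1 + φ A := by
      simpa only [_root_.map_mul, _root_.map_sub, _root_.map_add, _root_.map_one]
        using congrArg φ hcayley
    set w : Fin n ⊕ Fin n → ℂ := (φ A) *ᵥ z with hwdef
    have hw : μ • (z - w) = z + w := by
      have h := congrArg (fun B : Matrix (Fin n ⊕ Fin n) (Fin n ⊕ Fin n) ℂ => B *ᵥ z) hcayley'
      rw [← Matrix.mulVec_mulVec, hF'z, Matrix.mulVec_smul, Matrix.sub_mulVec,
        Matrix.one_mulVec, Matrix.add_mulVec, Matrix.one_mulVec] at h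
      exact h
    have h1μ : ∀ i, (1 + μ) * w i = (μ - 1) * z i := by
      intro i
      have h := congrFun hw i
      simp only [Pi.smul_apply, Pi.sub_apply, Pi.add_apply, smul_eq_mul] at h
      linear_combination -h
    by_cases hμ1 : μ = -1
    · exfalso
      apply hz
      funext i
      have h := h1μ i
      rw [hμ1] at h
      simp only [add_neg_cancel, zero_mul] at h
      have h2 : z i = 0 := by
        rcases mul_eq_zero.mp h.symm with hh | hh
        · norm_num at hh
        · exact hh
      simpa using h2
    have hμp1 : μ + 1 ≠ 0 := fun h => hμ1 (by linear_combination h)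
    set lam : ℂ := (μ - 1) / (μ + 1) with hlamdef
    have hwz : ∀ i, w i = lam * z i := by
      intro i
      rw [hlamdef]
      field_simp
      linear_combination (h1μ i) * 1 - 0  -- (1+μ) w i = (μ-1) z i vs w i (μ+1) = (μ-1) z i
    have hAz' : (A.map Complex.ofRealHom) *ᵥ z = lam • z := by
      rw [← hφA]
      funext i
      rw [show (φ A *ᵥ z) i = w i from rfl, hwz i]
      simp [Pi.smul_apply, smul_eq_mul]
    rcases heigA lam z hz hAz' with hlam0 | hlamneg
    · -- lam = 0 : then μ = 1 and z is in the kernel direction, contradicting hudot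
      exfalso
      have hμeq : μ = 1 := by
        rw [hlamdef] at hlam0
        rcases div_eq_zero_iff.mp hlam0 with h | h
        · linear_combination h
        · exact absurd h hμp1
      obtain ⟨hy, hrow⟩ := hrows lam z hAz'
      have hker : ∀ i, (∑ j, (L i j : ℂ) * z (Sum.inl j)) = 0 := by
        intro i
        have h := hrow i
        rw [hlam0] at h
        simpa using h
      have hxconst : ∀ i, z (Sum.inl i) = (n : ℂ)⁻¹ * ∑ j, z (Sum.inl j) :=
        kernel_lemma L Ldag hLdag₂ (fun j => z (Sum.inl j)) hker
      have hy0 : ∀ i, z (Sum.inr i) = 0 := by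
        intro i; rw [hy i, hlam0, zero_mul]
      -- expand hudot over the sum type
      have hsplit : (0 : ℂ) = ∑ i, (d i : ℂ) * z (Sum.inl i) + ∑ i, (m i : ℂ) * z (Sum.inr i) := by
        rw [← hudot]
        simp only [dotProduct, Fintype.sum_sum_type, hudef, Sum.elim_inl, Sum.elim_inr]
      have hzero : ∑ i, (d i : ℂ) * z (Sum.inl i) = 0 := by
        have h2 : ∑ i, (m i : ℂ) * z (Sum.inr i) = 0 := by
          apply Finset.sum_eq_zero; intro i _; rw [hy0 i, mul_zero]
        rw [h2, add_zero] at hsplit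
        exact hsplit.symm
      set t : ℂ := (n : ℂ)⁻¹ * ∑ j, z (Sum.inl j) with htdef
      have hzsum : ∑ i, (d i : ℂ) * z (Sum.inl i) = (c₀ : ℂ) * t := by
        rw [Finset.sum_congr rfl (fun i _ => by rw [hxconst i])]
        rw [← Finset.sum_mul, hc₀def]
        push_cast
        ring
      rw [hzsum] at hzero
      have hc₀C : (c₀ : ℂ) ≠ 0 := by exact_mod_cast hc₀.ne'
      have ht0 : t = 0 := by
        rcases mul_eq_zero.mp hzero with h | h
        · exact absurd h hc₀C
        · exact h
      apply hz
      funext k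
      cases k with
      | inl i => rw [hxconst i]; simp [ht0]
      | inr i => exact hy0 i
    · -- lam.re < 0 : |μ| < 1
      have h1mlam : (1 : ℂ) - lam ≠ 0 := by
        intro h
        have := congrArg Complex.re h
        simp only [Complex.sub_re, Complex.one_re, Complex.zero_re] at this
        linarith
      have hμlam : μ = (1 + lam) / (1 - lam) := by
        rw [hlamdef]
        field_simp
        ring
      have hsq : ‖1 + lam‖ ^ 2 < ‖1 - lam‖ ^ 2 := by
        rw [Complex.sq_norm, Complex.sq_norm,
          Complex.normSq_apply, Complex.normSq_apply]
        simp only [Complex.add_re, Complex.add_im, Complex.sub_re, Complex.sub_im,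
          Complex.one_re, Complex.one_im]
        nlinarith [hlamneg]
      have hlt : ‖1 + lam‖ < ‖1 - lam‖ :=
        lt_of_pow_lt_pow_left₀ 2 (norm_nonneg _) hsq
      rw [hμlam, norm_div]
      rw [div_lt_one (lt_of_le_of_lt (norm_nonneg _) hlt)]
      exact hlt
  -- every spectral value of G' has norm < 1
  have hspec : ∀ μ ∈ spectrum ℂ G', ‖μ‖₊ < 1 := by
    intro μ hμ
    rw [spectrum.mem_iff] at hμ
    have hdet : (algebraMap ℂ (Matrix (Fin n ⊕ Fin n) (Fin n ⊕ Fin n) ℂ) μ - G').det = 0 := by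
      by_contra hne
      exact hμ ((Matrix.isUnit_iff_isUnit_det _).mpr (isUnit_iff_ne_zero.mpr hne))
    obtain ⟨v, hvne, hv0⟩ := Matrix.exists_mulVec_eq_zero_iff.mpr hdet
    have hGv : G' *ᵥ v = μ • v := by
      have h := hv0
      rw [Matrix.sub_mulVec, Algebra.algebraMap_eq_smul_one, Matrix.smul_mulVec,
        Matrix.one_mulVec, sub_eq_zero] at h
      exact h.symm
    have h := heigG μ v hvne hGv
    exact_mod_cast h
  have hrad : spectralRadius ℂ G' < 1 := by
    have hfin := Matrix.finite_spectrum G'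
    have hsub : spectralRadius ℂ G' ≤ (((hfin.toFinset.sup (fun μ => ‖μ‖₊)) : NNReal) : ENNReal) := by
      apply iSup₂_le
      intro k hk
      exact_mod_cast ENNReal.coe_le_coe.mpr
        (Finset.le_sup (f := fun μ => ‖μ‖₊) (hfin.mem_toFinset.mpr hk))
    have hlt : ((hfin.toFinset.sup (fun μ => ‖μ‖₊)) : NNReal) < 1 := by
      rw [Finset.sup_lt_iff (by norm_num : (⊥ : NNReal) < 1)]
      intro μ hμ
      exact hspec μ (hfin.mem_toFinset.mp hμ)
    refine lt_of_le_of_lt hsub ?_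
    rw [← ENNReal.coe_one]
    exact ENNReal.coe_lt_coe.mpr hlt
  obtain ⟨ρ', hρ1, hρ2⟩ := exists_between hrad
  set ρ : NNReal := ρ'.toNNReal with hρdef
  have hρtop : ρ' ≠ ⊤ := (hρ2.trans ENNReal.one_lt_top).ne
  have hρcoe : (ρ : ENNReal) = ρ' := ENNReal.coe_toNNReal hρtop
  have hρlt1 : (ρ : ℝ) < 1 := by
    have h : (ρ : ENNReal) < 1 := by rw [hρcoe]; exact hρ2
    rw [← ENNReal.coe_one, ENNReal.coe_lt_coe] at h
    exact_mod_cast h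
  have hgel := spectrum.pow_nnnorm_pow_one_div_tendsto_nhds_spectralRadius G'
  have hev : ∀ᶠ k : ℕ in atTop, (‖G' ^ k‖₊ : ENNReal) ^ (1 / (k : ℝ)) < ρ' :=
    hgel.eventually_lt_const hρ1
  have hnormbound : ∀ᶠ k : ℕ in atTop, ‖G' ^ k‖ ≤ (ρ : ℝ) ^ k := by
    filter_upwards [hev, eventually_ge_atTop 1] with k hk hk1
    have hkne : (k : ℝ) ≠ 0 := Nat.cast_ne_zero.mpr (by omega)
    have h1 : (‖G' ^ k‖₊ : ENNReal) ≤ ρ' ^ k := by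
      calc (‖G' ^ k‖₊ : ENNReal) = ((‖G' ^ k‖₊ : ENNReal) ^ (1 / (k : ℝ))) ^ (k : ℝ) := by
            rw [← ENNReal.rpow_mul, one_div, inv_mul_cancel₀ hkne, ENNReal.rpow_one]
      _ ≤ ρ' ^ (k : ℝ) := ENNReal.rpow_le_rpow hk.le (by positivity)
      _ = ρ' ^ k := by rw [ENNReal.rpow_natCast]
    have h3 : ‖G' ^ k‖₊ ≤ ρ ^ k := by
      rw [← hρcoe, ← ENNReal.coe_pow, ENNReal.coe_le_coe] at h1
      exact h1
    calc ‖G' ^ k‖ = ((‖G' ^ k‖₊ : NNReal) : ℝ) := (coe_nnnorm _).symm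
    _ ≤ ((ρ ^ k : NNReal) : ℝ) := by exact_mod_cast h3
    _ = (ρ : ℝ) ^ k := by push_cast; rfl
  have hGk0 : ∀ i j : Fin n ⊕ Fin n, Tendsto (fun k => (G ^ k) i j) atTop (nhds 0) := by
    intro i j
    apply squeeze_zero_norm' _ (tendsto_pow_atTop_nhds_zero_of_lt_one ρ.coe_nonneg hρlt1)
    filter_upwards [hnormbound] with k hk
    have hentry : ‖(G ^ k) i j‖ = ‖(G' ^ k) i j‖ := by
      rw [hG'entry, Complex.norm_real]
    rw [hentry]
    have hle : ‖(G' ^ k) i j‖₊ ≤ ‖G' ^ k‖₊ := by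
      rw [Matrix.linfty_opNNNorm_def]
      refine le_trans ?_ (Finset.le_sup (f := fun i => ∑ j, ‖(G' ^ k) i j‖₊)
        (Finset.mem_univ i))
      exact Finset.single_le_sum (f := fun j => ‖(G' ^ k) i j‖₊)
        (fun _ _ => zero_le) (Finset.mem_univ j)
    exact le_trans (by exact_mod_cast hle) hk
  -- the limiting argument
  intro v
  have hdq : ∀ w : Fin n ⊕ Fin n → ℝ, w ⬝ᵥ P *ᵥ w = ∑ i, w i * ∑ j, P i j * w j := by
    intro w; simp [dotProduct, Matrix.mulVec]
  have hcoord : ∀ i, Tendsto (fun k => ((F ^ (k + 1)) *ᵥ v) i) atTop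
      (nhds ((Pi₀ *ᵥ v) i)) := by
    intro i
    have hsplit : ∀ k : ℕ, ((F ^ (k + 1)) *ᵥ v) i
        = (Pi₀ *ᵥ v) i + ∑ j, (G ^ (k + 1)) i j * v j := by
      intro k
      rw [hGpow k, Matrix.add_mulVec]
      simp [Matrix.mulVec, dotProduct]
    rw [funext hsplit]
    have h2 : Tendsto (fun k : ℕ => ∑ j, (G ^ (k + 1)) i j * v j) atTop (nhds 0) := by
      have h3 := tendsto_finset_sum (Finset.univ : Finset (Fin n ⊕ Fin n))
        (fun j _ => (((hGk0 i j).comp (tendsto_add_atTop_nat 1)).mul_const (v j)))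
      simpa using h3
    simpa using tendsto_const_nhds.add h2
  have hlim : Tendsto (fun k => ((F ^ (k + 1)) *ᵥ v) ⬝ᵥ P *ᵥ ((F ^ (k + 1)) *ᵥ v)) atTop
      (nhds ((Pi₀ *ᵥ v) ⬝ᵥ P *ᵥ (Pi₀ *ᵥ v))) := by
    have he : (fun k => ((F ^ (k + 1)) *ᵥ v) ⬝ᵥ P *ᵥ ((F ^ (k + 1)) *ᵥ v))
        = fun k => ∑ i, ((F ^ (k + 1)) *ᵥ v) i * ∑ j, P i j * ((F ^ (k + 1)) *ᵥ v) j :=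
      funext fun k => hdq _
    rw [he, hdq]
    apply tendsto_finset_sum
    intro i _
    exact (hcoord i).mul
      (tendsto_finset_sum _ fun j _ => (hcoord j).const_mul (P i j))
  have htarget : (Pi₀ *ᵥ v) ⬝ᵥ P *ᵥ (Pi₀ *ᵥ v) = 0 := by
    rw [hPiv v, Matrix.mulVec_smul, hPv₀]
    simp
  rw [htarget] at hlim
  exact le_of_tendsto' hlim fun k => hFpow (k + 1) v


/-- `‖G‖₂² = Trace(BᵀPB) = Σᵢ wᵢ (X₂)ᵢᵢ / mᵢ²` and the two-sided bound
`(min wᵢ)/(2 max dᵢ)·(Trace(NL†) + Σᵢ sᵢ/mᵢ) ≤ ‖G‖₂² ≤ (max wᵢ)/(2 min dᵢ)·(Trace(NL†) + Σᵢ sᵢ/mᵢ)`. -/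
theorem h2_norm_performance_bounds
    (n : ℕ) (hn : 0 < n) (m d s w : Fin n → ℝ)
    (hm : ∀ i, 0 < m i) (hd : ∀ i, 0 < d i) (hs : ∀ i, 0 < s i) (hw : ∀ i, 0 ≤ w i)
    (M D S W : Matrix (Fin n) (Fin n) ℝ)
    (hM : M = diagonal m) (hD : D = diagonal d) (hS : S = diagonal s) (hW : W = diagonal w)
    (L Ldag N : Matrix (Fin n) (Fin n) ℝ)
    (hLsym : L.IsSymm) (hLpsd : L.PosSemidef) (hL1 : L.mulVec (fun _ => 1) = 0)
    (hLdag₁ : L * Ldag = 1 - (n : ℝ)⁻¹ • Matrix.of (fun _ _ => (1 : ℝ)))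
    (hLdag₂ : Ldag * L = 1 - (n : ℝ)⁻¹ • Matrix.of (fun _ _ => (1 : ℝ)))
    (hLdagsym : Ldag.IsSymm)
    (hNsym : N.IsSymm) (hNpsd : N.PosSemidef) (hN1 : N.mulVec (fun _ => 1) = 0)
    (A : Matrix (Fin n ⊕ Fin n) (Fin n ⊕ Fin n) ℝ)
    (hA : A = fromBlocks 0 1 (-(M⁻¹ * L)) (-(M⁻¹ * D)))
    (B : Matrix (Fin n ⊕ Fin n) (Fin n) ℝ)
    (hB : B = Matrix.of (Sum.elim (0 : Matrix (Fin n) (Fin n) ℝ)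
      (M⁻¹ * diagonal fun i => Real.sqrt (w i))))
    (X₁ X₀ X₂ : Matrix (Fin n) (Fin n) ℝ)
    (P : Matrix (Fin n ⊕ Fin n) (Fin n ⊕ Fin n) ℝ)
    (hP : P = fromBlocks X₁ X₀ X₀ᵀ X₂) (hPsym : Pᵀ = P)
    (hLyap : P * A + Aᵀ * P + fromBlocks N 0 0 S = 0)
    (hPv₀ : P.mulVec (Sum.elim (fun _ => 1) 0) = 0)
    -- the trace identity from Theorem 1's proof may be used:
    (hprev : (D * M⁻¹ * M⁻¹ * X₂).trace = (1 / 2) * (M⁻¹ * S + N * Ldag).trace) :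
    (Bᵀ * P * B).trace = ∑ i, w i * X₂ i i / (m i) ^ 2 ∧
    (Finset.univ.inf' (Finset.univ_nonempty_iff.mpr (Fin.pos_iff_nonempty.mp hn)) w) /
        (2 * Finset.univ.sup' (Finset.univ_nonempty_iff.mpr (Fin.pos_iff_nonempty.mp hn)) d) *
        ((N * Ldag).trace + ∑ i, s i / m i) ≤ (Bᵀ * P * B).trace ∧
    (Bᵀ * P * B).trace ≤
      (Finset.univ.sup' (Finset.univ_nonempty_iff.mpr (Fin.pos_iff_nonempty.mp hn)) w) /
        (2 * Finset.univ.inf' (Finset.univ_nonempty_iff.mpr (Fin.pos_iff_nonempty.mp hn)) d) *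
        ((N * Ldag).trace + ∑ i, s i / m i) := by
  classical
  have hmne : ∀ i, m i ≠ 0 := fun i => (hm i).ne'
  have hMinv : M⁻¹ = diagonal (fun i => (m i)⁻¹) := by
    apply Matrix.inv_eq_right_inv
    rw [hM, diagonal_mul_diagonal]
    convert Matrix.diagonal_one using 2
    exact funext fun i => mul_inv_cancel₀ (hmne i)
  have hSpsd : S.PosSemidef := by
    rw [hS]
    exact Matrix.PosSemidef.diagonal (fun i => (hs i).le)
  -- nonnegativity of X₂ diagonal via the Lyapunov quadratic form
  have hpsd := P_quadform_nonneg n hn m d hm hd M D hM hD L Ldag N S hLsym hLpsd hL1 hLdag₂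
    hNpsd hSpsd A hA P hLyap hPv₀
  have hX₂ : ∀ i, 0 ≤ X₂ i i := by
    intro i
    have h := hpsd (fun k => if k = Sum.inr i then 1 else 0)
    have heq : (fun k => if k = Sum.inr i then (1 : ℝ) else 0) ⬝ᵥ
        P *ᵥ (fun k => if k = Sum.inr i then (1 : ℝ) else 0) = P (Sum.inr i) (Sum.inr i) := by
      simp only [dotProduct, Matrix.mulVec, ite_mul, one_mul, zero_mul, mul_ite,
        mul_one, mul_zero]
      rw [Finset.sum_ite_eq' Finset.univ (Sum.inr i)]
      simp [Finset.sum_ite_eq' Finset.univ (Sum.inr i)]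
    rw [heq] at h
    rw [hP] at h
    simpa [Matrix.fromBlocks_apply₂₂] using h
  -- entries of B
  have hBe1 : ∀ (a : Fin n) (j : Fin n), B (Sum.inl a) j = 0 := by
    intro a j; rw [hB]; rfl
  have hBe2 : ∀ (a j : Fin n), B (Sum.inr a) j
      = if a = j then (m a)⁻¹ * Real.sqrt (w a) else 0 := by
    intro a j
    rw [hB]
    show (M⁻¹ * diagonal fun i => Real.sqrt (w i)) a j = _
    rw [hMinv, diagonal_mul_diagonal, Matrix.diagonal_apply]
  -- trace formula
  have htr : (Bᵀ * P * B).trace = ∑ i, w i * X₂ i i / (m i) ^ 2 := by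
    rw [Matrix.trace]
    apply Finset.sum_congr rfl
    intro j _
    rw [Matrix.diag]
    rw [Matrix.mul_apply]
    have hBPj : ∀ k, (Bᵀ * P) j k = (m j)⁻¹ * Real.sqrt (w j) * P (Sum.inr j) k := by
      intro k
      rw [Matrix.mul_apply, Fintype.sum_sum_type]
      simp only [Matrix.transpose_apply, hBe1, zero_mul, Finset.sum_const_zero, zero_add]
      rw [Finset.sum_congr rfl (fun a _ => by rw [hBe2 a j])]
      simp only [ite_mul, zero_mul]
      rw [Finset.sum_ite_eq' Finset.univ j]
      simp
    rw [Finset.sum_congr rfl (fun k _ => by rw [hBPj k])]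
    rw [Fintype.sum_sum_type]
    simp only [hBe1, mul_zero, Finset.sum_const_zero, zero_add]
    rw [Finset.sum_congr rfl (fun a _ => by rw [hBe2 a j])]
    simp only [mul_ite, mul_zero]
    rw [Finset.sum_ite_eq' Finset.univ j]
    simp only [Finset.mem_univ, if_true]
    rw [hP, Matrix.fromBlocks_apply₂₂]
    have hsq : Real.sqrt (w j) * Real.sqrt (w j) = w j := Real.mul_self_sqrt (hw j)
    field_simp
    ring_nf
    rw [show Real.sqrt (w j) ^ 2 = Real.sqrt (w j) * Real.sqrt (w j) from sq (Real.sqrt (w j)),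
      hsq]
    ring
  have hDtr : (D * M⁻¹ * M⁻¹ * X₂).trace = ∑ i, d i * X₂ i i / m i ^ 2 := by
    rw [hD, hMinv, diagonal_mul_diagonal, diagonal_mul_diagonal]
    rw [Matrix.trace]
    apply Finset.sum_congr rfl
    intro i _
    rw [Matrix.diag, Matrix.mul_apply]
    simp only [Matrix.diagonal_apply, ite_mul, zero_mul]
    rw [Finset.sum_ite_eq Finset.univ i]
    simp only [Finset.mem_univ, if_true]
    field_simp
  have hMStr : (M⁻¹ * S).trace = ∑ i, s i / m i := by
    rw [hMinv, hS, diagonal_mul_diagonal, Matrix.trace_diagonal]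
    exact Finset.sum_congr rfl fun i _ => by rw [div_eq_inv_mul]
  have hKeq : (N * Ldag).trace + ∑ i, s i / m i = 2 * ∑ i, d i * X₂ i i / m i ^ 2 := by
    have h := hprev
    rw [hDtr, Matrix.trace_add, hMStr] at h
    linarith
  set wmin := Finset.univ.inf' (Finset.univ_nonempty_iff.mpr (Fin.pos_iff_nonempty.mp hn)) w
    with hwmindef
  set wmax := Finset.univ.sup' (Finset.univ_nonempty_iff.mpr (Fin.pos_iff_nonempty.mp hn)) w
    with hwmaxdef
  set dmin := Finset.univ.inf' (Finset.univ_nonempty_iff.mpr (Fin.pos_iff_nonempty.mp hn)) d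
    with hdmindef
  set dmax := Finset.univ.sup' (Finset.univ_nonempty_iff.mpr (Fin.pos_iff_nonempty.mp hn)) d
    with hdmaxdef
  have hwmin_le : ∀ i, wmin ≤ w i := fun i => Finset.inf'_le w (Finset.mem_univ i)
  have hwmax_ge : ∀ i, w i ≤ wmax := fun i => Finset.le_sup' w (Finset.mem_univ i)
  have hdmin_le : ∀ i, dmin ≤ d i := fun i => Finset.inf'_le d (Finset.mem_univ i)
  have hdmax_ge : ∀ i, d i ≤ dmax := fun i => Finset.le_sup' d (Finset.mem_univ i)
  have hi₀ : Nonempty (Fin n) := Fin.pos_iff_nonempty.mp hn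
  obtain ⟨i₀⟩ := hi₀
  have hwmin_nonneg : 0 ≤ wmin := by
    obtain ⟨i₁, _, hi₁⟩ := Finset.exists_mem_eq_inf' (Finset.univ_nonempty_iff.mpr
      (Fin.pos_iff_nonempty.mp hn)) w
    rw [hwmindef, hi₁]; exact hw i₁
  have hwmax_nonneg : 0 ≤ wmax := le_trans (hw i₀) (hwmax_ge i₀)
  have hdmin_pos : 0 < dmin := by
    obtain ⟨i₁, _, hi₁⟩ := Finset.exists_mem_eq_inf' (Finset.univ_nonempty_iff.mpr
      (Fin.pos_iff_nonempty.mp hn)) d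
    rw [hdmindef, hi₁]; exact hd i₁
  have hdmax_pos : 0 < dmax := lt_of_lt_of_le (hd i₀) (hdmax_ge i₀)
  have htnn : ∀ i, 0 ≤ X₂ i i / m i ^ 2 := fun i => div_nonneg (hX₂ i) (sq_nonneg _)
  refine ⟨htr, ?_, ?_⟩
  · -- lower bound
    rw [htr, hKeq]
    have heq1 : wmin / (2 * dmax) * (2 * ∑ i, d i * X₂ i i / m i ^ 2)
        = ∑ i, wmin * d i / dmax * (X₂ i i / m i ^ 2) := by
      rw [show wmin / (2 * dmax) * (2 * ∑ i, d i * X₂ i i / m i ^ 2)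
          = (wmin / dmax) * ∑ i, d i * X₂ i i / m i ^ 2 by field_simp]
      rw [Finset.mul_sum]
      apply Finset.sum_congr rfl
      intro i _
      field_simp
    rw [heq1]
    apply Finset.sum_le_sum
    intro i _
    have h1 : wmin * d i / dmax ≤ w i := by
      have h2 : d i / dmax ≤ 1 := (div_le_one hdmax_pos).mpr (hdmax_ge i)
      calc wmin * d i / dmax = wmin * (d i / dmax) := by ring
      _ ≤ wmin * 1 := mul_le_mul_of_nonneg_left h2 hwmin_nonneg
      _ = wmin := mul_one _
      _ ≤ w i := hwmin_le i
    calc wmin * d i / dmax * (X₂ i i / m i ^ 2) ≤ w i * (X₂ i i / m i ^ 2) :=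
        mul_le_mul_of_nonneg_right h1 (htnn i)
    _ = w i * X₂ i i / m i ^ 2 := by ring
  · -- upper bound
    rw [htr, hKeq]
    have heq1 : wmax / (2 * dmin) * (2 * ∑ i, d i * X₂ i i / m i ^ 2)
        = ∑ i, wmax * d i / dmin * (X₂ i i / m i ^ 2) := by
      rw [show wmax / (2 * dmin) * (2 * ∑ i, d i * X₂ i i / m i ^ 2)
          = (wmax / dmin) * ∑ i, d i * X₂ i i / m i ^ 2 by field_simp]
      rw [Finset.mul_sum]
      apply Finset.sum_congr rfl
      intro i _
      field_simp
    rw [heq1]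
    apply Finset.sum_le_sum
    intro i _
    have h1 : w i ≤ wmax * d i / dmin := by
      have h2 : (1 : ℝ) ≤ d i / dmin := (one_le_div hdmin_pos).mpr (hdmin_le i)
      calc w i ≤ wmax := hwmax_ge i
      _ = wmax * 1 := (mul_one _).symm
      _ ≤ wmax * (d i / dmin) := mul_le_mul_of_nonneg_left h2 hwmax_nonneg
      _ = wmax * d i / dmin := by ring
    calc w i * X₂ i i / m i ^ 2 = w i * (X₂ i i / m i ^ 2) := by ring
    _ ≤ wmax * d i / dmin * (X₂ i i / m i ^ 2) :=
        mul_le_mul_of_nonneg_right h1 (htnn i)
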